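/- Let n̄ = (n_1,…,n_r) with ∑_i n_i = n, and suppose given subsets A_1,…,A_r ⊆ [n]' = {1,…,n} with |A_i| = n_i. Put ζ_i = π_{A_i ∪ {0}} : [n] → [n_i]. Then the tuple (ζ_1,…,ζ_r) is an n̄-shuffle if and only if [n]' is the disjoint union of the sets A_1,…,A_r. -/

import Mathlib

set_option maxHeartbeats 800000


/-- `σ_A : [m] → [n]` for a subset `A ⊆ [n]` with `|A| = m + 1`. -/
def sigmaA {n m : ℕ} (A : Finset (Fin (n + 1))) (h : A.card = m + 1) :
    Fin (m + 1) → Fin (n + 1) :=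
  fun j => (A.orderIsoOfFin h j : Fin (n + 1))

/-- `π_A : [n] → [m]` for a pointed subset `A ⊆ [n]` with `|A| = m + 1`. -/
def piA {n m : ℕ} (A : Finset (Fin (n + 1))) (h0 : (0 : Fin (n + 1)) ∈ A)
    (h : A.card = m + 1) (i : Fin (n + 1)) : Fin (m + 1) :=
  Finset.max' (Finset.univ.filter fun j => sigmaA A h j ≤ i)
    (by refine ⟨(A.orderIsoOfFin h).symm ⟨0, h0⟩,
          Finset.mem_filter.mpr ⟨Finset.mem_univ _, ?_⟩⟩
        have : sigmaA A h ((A.orderIsoOfFin h).symm ⟨0, h0⟩) = 0 := by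
          simp [sigmaA]
        rw [this]
        exact Fin.zero_le i)

lemma sigmaA_strictMono {n m : ℕ} (A : Finset (Fin (n + 1))) (h : A.card = m + 1) :
    StrictMono (sigmaA A h) := fun a b hab => by
  simpa [sigmaA, ← Subtype.coe_lt_coe] using (A.orderIsoOfFin h).strictMono hab

lemma piA_coe {n m : ℕ} (A : Finset (Fin (n + 1))) (h0 : (0 : Fin (n + 1)) ∈ A)
    (h : A.card = m + 1) (x : Fin (n + 1)) :
    ((piA A h0 h x : ℕ)) + 1 = (A.filter (· ≤ x)).card := by
  classical
  set S := Finset.univ.filter (fun j => sigmaA A h j ≤ x) with hS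
  have hne : S.Nonempty := by
    refine ⟨(A.orderIsoOfFin h).symm ⟨0, h0⟩,
      Finset.mem_filter.mpr ⟨Finset.mem_univ _, ?_⟩⟩
    have : sigmaA A h ((A.orderIsoOfFin h).symm ⟨0, h0⟩) = 0 := by simp [sigmaA]
    rw [this]; exact Fin.zero_le x
  have hmem : ∀ j, j ∈ S ↔ sigmaA A h j ≤ x := by
    intro j; simp [hS]
  have hIic : S = Finset.Iic (S.max' hne) := by
    ext j
    rw [Finset.mem_Iic]
    constructor
    · exact fun hj => S.le_max' j hj
    · intro hj
      rw [hmem]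
      exact le_trans ((sigmaA_strictMono A h).monotone hj)
        ((hmem _).1 (S.max'_mem hne))
  have hpi : piA A h0 h x = S.max' hne := rfl
  have hcardS : S.card = (piA A h0 h x : ℕ) + 1 := by
    rw [hIic, Fin.card_Iic, hpi]
  have himg : (A.filter (· ≤ x)) = S.image (sigmaA A h) := by
    ext a
    simp only [Finset.mem_filter, Finset.mem_image]
    constructor
    · rintro ⟨ha, hax⟩
      refine ⟨(A.orderIsoOfFin h).symm ⟨a, ha⟩, (hmem _).2 ?_, ?_⟩
      · simpa [sigmaA] using hax
      · simp [sigmaA]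
    · rintro ⟨j, hj, rfl⟩
      exact ⟨(A.orderIsoOfFin h j).2, (hmem j).1 hj⟩
  rw [himg, Finset.card_image_of_injective _ (sigmaA_strictMono A h).injective, hcardS]

lemma piA_sigmaA {n m : ℕ} (A : Finset (Fin (n + 1))) (h0 : (0 : Fin (n + 1)) ∈ A)
    (h : A.card = m + 1) (j : Fin (m + 1)) :
    piA A h0 h (sigmaA A h j) = j := by
  unfold piA
  apply le_antisymm
  · apply Finset.max'_le
    intro k hk
    rw [Finset.mem_filter] at hk
    exact (sigmaA_strictMono A h).le_iff_le.mp hk.2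
  · exact Finset.le_max' (Finset.univ.filter fun k => sigmaA A h k ≤ sigmaA A h j) j
      (Finset.mem_filter.mpr ⟨Finset.mem_univ _, le_refl _⟩)

lemma piA_mono {n m : ℕ} (A : Finset (Fin (n + 1))) (h0 : (0 : Fin (n + 1)) ∈ A)
    (h : A.card = m + 1) : Monotone (piA A h0 h) := by
  unfold piA
  intro x y hxy
  apply Finset.max'_le
  intro k hk
  apply Finset.le_max'
  rw [Finset.mem_filter] at hk ⊢
  exact ⟨hk.1, hk.2.trans hxy⟩

/-- Given `n̄ = (n_1, …, n_r)` with `∑ n_i = n` and subsets `A_i ⊆ [n]' = {1, …, n}` with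
`|A_i| = n_i`, setting `ζ_i = π_{A_i ∪ {0}}`, the tuple `(ζ_1, …, ζ_r)` is an `n̄`-shuffle
iff `[n]'` is the disjoint union of the `A_i`. -/
theorem shuffle_iff_disjoint_union {r n : ℕ} (nbar : Fin r → ℕ) (hsum : ∑ i, nbar i = n)
    (A : Fin r → Finset (Fin (n + 1))) (h0 : ∀ i, (0 : Fin (n + 1)) ∉ A i)
    (hcard : ∀ i, (A i).card = nbar i)
    (ζ : ∀ i, Fin (n + 1) → Fin (nbar i + 1))
    (hζ : ∀ i, ζ i = piA (insert 0 (A i)) (Finset.mem_insert_self 0 (A i))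
        (by rw [Finset.card_insert_of_notMem (h0 i), hcard i])) :
    ((∀ i, Monotone (ζ i) ∧ Function.Surjective (ζ i)) ∧
        Function.Injective (fun s => fun i => ζ i s)) ↔
      (Finset.univ.biUnion A = Finset.univ.filter (fun x : Fin (n + 1) => x ≠ 0) ∧
        ∀ i j, i ≠ j → Disjoint (A i) (A j)) := by
  classical
  -- value of ζ as a count
  have hz : ∀ i x, ((ζ i x : ℕ)) = ((A i).filter (· ≤ x)).card := by
    intro i x
    have key : ((ζ i x : ℕ)) + 1 = ((insert 0 (A i)).filter (· ≤ x)).card := by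
      rw [hζ i]; exact piA_coe _ _ _ x
    rw [Finset.filter_insert] at key
    simp only [Fin.zero_le, if_true] at key
    rw [Finset.card_insert_of_notMem
      (by simp [h0 i] : (0 : Fin (n + 1)) ∉ (A i).filter (· ≤ x))] at key
    omega
  -- monotonicity and surjectivity always hold
  have hmono : ∀ i, Monotone (ζ i) := by
    intro i; rw [hζ i]; exact piA_mono _ _ _
  have hsurj : ∀ i, Function.Surjective (ζ i) := by
    intro i t
    rw [hζ i]
    have hins : (insert 0 (A i)).card = nbar i + 1 := by
      rw [Finset.card_insert_of_notMem (h0 i), hcard i]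
    exact ⟨sigmaA (insert 0 (A i)) hins t,
      piA_sigmaA (insert 0 (A i)) (Finset.mem_insert_self 0 (A i)) hins t⟩
  -- coverage predicate
  have cover_inj : (∀ s : Fin (n + 1), s ≠ 0 → ∃ i, s ∈ A i) →
      Function.Injective (fun s => fun i => ζ i s) := by
    intro hcov
    have key : ∀ x y : Fin (n + 1), x < y → (fun i => ζ i x) ≠ fun i => ζ i y := by
      intro x y hxy heq
      have hy0 : y ≠ 0 := (x.zero_le.trans_lt hxy).ne'
      obtain ⟨i, hyi⟩ := hcov y hy0
      have h1 : ((ζ i x : ℕ)) = ((ζ i y : ℕ)) := by rw [congrFun heq i]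
      rw [hz, hz] at h1
      have hss : (A i).filter (· ≤ x) ⊂ (A i).filter (· ≤ y) := by
        constructor
        · intro a ha
          rw [Finset.mem_filter] at ha ⊢
          exact ⟨ha.1, le_trans ha.2 hxy.le⟩
        · intro hsub
          have := hsub (Finset.mem_filter.mpr ⟨hyi, le_refl y⟩)
          rw [Finset.mem_filter] at this
          exact absurd this.2 (not_le.mpr hxy)
      exact absurd h1 (Finset.card_lt_card hss).ne
    intro x y hxy
    by_contra hne
    rcases lt_or_gt_of_ne hne with hlt | hgt
    · exact key x y hlt hxy
    · exact key y x hgt hxy.symm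
  have inj_cover : Function.Injective (fun s => fun i => ζ i s) →
      ∀ s : Fin (n + 1), s ≠ 0 → ∃ i, s ∈ A i := by
    intro hinj s hs0
    by_contra hno
    push_neg at hno
    obtain ⟨k, hk⟩ : ∃ k : ℕ, (s : ℕ) = k + 1 := by
      have : (s : ℕ) ≠ 0 := fun h => hs0 (Fin.ext h)
      exact ⟨(s : ℕ) - 1, by omega⟩
    set s' : Fin (n + 1) := ⟨k, by omega⟩ with hs'
    have heq : (fun i => ζ i s') = fun i => ζ i s := by
      funext i
      apply Fin.ext
      rw [hz, hz]
      congr 1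
      ext a
      simp only [Finset.mem_filter, and_congr_right_iff]
      intro ha
      have hane : (a : ℕ) ≠ (s : ℕ) := fun h => hno i (by rwa [Fin.ext h] at ha)
      constructor
      · intro h
        have h' : (a : ℕ) ≤ k := h
        show (a : ℕ) ≤ (s : ℕ)
        omega
      · intro h
        have h' : (a : ℕ) ≤ (s : ℕ) := h
        show (a : ℕ) ≤ k
        omega
    have hv : k = (s : ℕ) := congrArg Fin.val (hinj heq)
    omega
  constructor
  · rintro ⟨-, hinj⟩
    have hcov := inj_cover hinj
    -- multiplicity count
    set c : Fin (n + 1) → ℕ := fun a => (Finset.univ.filter fun i => a ∈ A i).card with hc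
    set T : Finset (Fin (n + 1)) := Finset.univ.filter (fun x => x ≠ 0) with hT
    have hTcard : T.card = n := by
      rw [hT]
      rw [Finset.filter_ne']
      simp [Finset.card_erase_of_mem]
    have hsum1 : ∑ a ∈ Finset.univ, c a = n := by
      have : ∑ a ∈ Finset.univ, c a = ∑ i ∈ Finset.univ, (A i).card := by
        simp only [hc, Finset.card_filter]
        rw [Finset.sum_comm]
        congr 1
        ext i
        rw [← Finset.card_filter]
        congr 1
        simp [Finset.filter_mem_eq_inter]
      rw [this]
      simp_rw [hcard]
      exact hsum
    have hsumT : ∑ a ∈ T, c a = n := by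
      have hstep : ∑ a ∈ T, c a = ∑ a ∈ Finset.univ, c a := by
        apply Finset.sum_subset (Finset.subset_univ T)
        intro a _ haT
        have ha0 : a = 0 := by
          by_contra h
          exact haT (Finset.mem_filter.mpr ⟨Finset.mem_univ _, h⟩)
        subst ha0
        simp [hc, Finset.filter_eq_empty_iff, h0]
      rw [hstep, hsum1]
    have hone : ∀ a ∈ T, c a = 1 := by
      by_contra hcon
      push_neg at hcon
      obtain ⟨a, haT, hane⟩ := hcon
      have ha1 : 1 ≤ c a := by
        have ha0 : a ≠ 0 := (Finset.mem_filter.mp haT).2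
        obtain ⟨i, hi⟩ := hcov a ha0
        exact Finset.card_pos.mpr ⟨i, Finset.mem_filter.mpr ⟨Finset.mem_univ _, hi⟩⟩
      have hlt : ∑ a ∈ T, (1 : ℕ) < ∑ a ∈ T, c a := by
        apply Finset.sum_lt_sum
        · intro b hb
          have hb0 : b ≠ 0 := (Finset.mem_filter.mp hb).2
          obtain ⟨i, hi⟩ := hcov b hb0
          exact Finset.card_pos.mpr ⟨i, Finset.mem_filter.mpr ⟨Finset.mem_univ _, hi⟩⟩
        · exact ⟨a, haT, by omega⟩
      rw [Finset.sum_const, smul_eq_mul, mul_one, hTcard, hsumT] at hlt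
      omega
    constructor
    · ext a
      rw [Finset.mem_biUnion]
      constructor
      · rintro ⟨i, -, hi⟩
        refine Finset.mem_filter.mpr ⟨Finset.mem_univ _, ?_⟩
        rintro rfl
        exact h0 i hi
      · intro ha
        obtain ⟨i, hi⟩ := hcov a (Finset.mem_filter.mp ha).2
        exact ⟨i, Finset.mem_univ _, hi⟩
    · intro i j hij
      rw [Finset.disjoint_left]
      intro a hai haj
      have ha0 : a ≠ 0 := fun h => h0 i (h ▸ hai)
      have haT : a ∈ T := Finset.mem_filter.mpr ⟨Finset.mem_univ _, ha0⟩
      have h2 : 1 < c a := by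
        rw [hc, Finset.one_lt_card]
        exact ⟨i, Finset.mem_filter.mpr ⟨Finset.mem_univ _, hai⟩,
          j, Finset.mem_filter.mpr ⟨Finset.mem_univ _, haj⟩, hij⟩
      have := hone a haT
      omega
  · rintro ⟨hU, -⟩
    refine ⟨fun i => ⟨hmono i, hsurj i⟩, cover_inj ?_⟩
    intro s hs0
    have : s ∈ Finset.univ.biUnion A := by
      rw [hU]
      exact Finset.mem_filter.mpr ⟨Finset.mem_univ _, hs0⟩
    obtain ⟨i, -, hi⟩ := Finset.mem_biUnion.mp this
    exact ⟨i, hi⟩
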